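/- Let ν > 0, a > 0, τ > 0, and v(τ, y) = y · ∫_0^{r(y)} η^{ν−1} e^{−η/2} dη / (2^ν Γ(ν)) with r(y) = (2ν/a)²/(y^{1/ν} τ). Then the partial derivative v_y(τ,y) tends to 0 as y → ∞, and for each fixed y > 0, v_y(τ,y) tends to 1 as τ → 0+. -/

import Mathlib

open Set Filter Real
open Set Filter Real MeasureTheory intervalIntegral Topology

lemma cev_intInt {ν : ℝ} (hν : 0 < ν) (x : ℝ) :
    IntervalIntegrable (fun η : ℝ => η ^ (ν - 1) * Real.exp (-η/2)) volume 0 x :=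
  (intervalIntegrable_rpow' (by linarith)).mul_continuousOn
    (Continuous.continuousOn (by continuity))

lemma cev_intIoi {ν : ℝ} (hν : 0 < ν) :
    IntegrableOn (fun η : ℝ => η ^ (ν - 1) * Real.exp (-η/2)) (Ioi 0) := by
  have := integrableOn_rpow_mul_exp_neg_mul_rpow (p := 1) (s := ν - 1) (b := 1/2)
    (by linarith) (by norm_num) (by norm_num)
  refine this.congr_fun (fun x _ => ?_) measurableSet_Ioi
  beta_reduce; rw [Real.rpow_one]; ring_nf

lemma cev_total {ν : ℝ} (hν : 0 < ν) :
    ∫ η in Ioi (0:ℝ), η ^ (ν - 1) * Real.exp (-η/2) = 2 ^ ν * Real.Gamma ν := by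
  have := integral_rpow_mul_exp_neg_mul_Ioi hν (by norm_num : (0:ℝ) < 1/2)
  rw [show ((1:ℝ)/(1/2)) = 2 by norm_num] at this
  rw [← this]
  refine setIntegral_congr_fun measurableSet_Ioi (fun t _ => ?_)
  ring_nf

lemma cev_contOn {ν : ℝ} :
    ContinuousOn (fun η : ℝ => η ^ (ν - 1) * Real.exp (-η/2)) (Ioi 0) := by
  intro x hx
  exact ((Real.continuousAt_rpow_const x (ν - 1) (Or.inl (ne_of_gt hx))).mul
    ((Real.continuous_exp.comp (by continuity)).continuousAt)).continuousWithinAt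

lemma cev_deriv {ν a τ y : ℝ} (hν : 0 < ν) (ha : 0 < a) (hτ : 0 < τ) (hy : 0 < y) :
    deriv (fun y' : ℝ => y' *
        (∫ η in (0:ℝ)..((2*ν/a)^2 / (y' ^ (1/ν) * τ)),
          η ^ (ν - 1) * Real.exp (-η/2)) / ((2:ℝ) ^ ν * Real.Gamma ν)) y
    = (∫ η in (0:ℝ)..((2*ν/a)^2 / (y ^ (1/ν) * τ)), η ^ (ν - 1) * Real.exp (-η/2))
        / ((2:ℝ) ^ ν * Real.Gamma ν)
      - ((2*ν/a)^2 / (y ^ (1/ν) * τ)) ^ ν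
          * Real.exp (-((2*ν/a)^2 / (y ^ (1/ν) * τ))/2) / (ν * ((2:ℝ) ^ ν * Real.Gamma ν)) := by
  have hc : (0:ℝ) < (2*ν/a)^2 := by positivity
  set c : ℝ := (2*ν/a)^2 with hcdef
  have hu : (0:ℝ) < y ^ (1/ν) := Real.rpow_pos_of_pos hy _
  set u : ℝ := y ^ (1/ν) with hudef
  have hr : (0:ℝ) < c / (u * τ) := by positivity
  set r : ℝ := c / (u * τ) with hrdef
  -- derivative of the inner map y' ↦ c / (y'^(1/ν) * τ)
  have hg : HasDerivAt (fun y' : ℝ => y' ^ (1/ν) * τ) ((1/ν * y ^ (1/ν - 1)) * τ) y :=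
    (Real.hasDerivAt_rpow_const (Or.inl hy.ne')).mul_const τ
  have hrd : HasDerivAt (fun y' : ℝ => c / (y' ^ (1/ν) * τ))
      ((0 * (u * τ) - c * ((1/ν * y ^ (1/ν - 1)) * τ)) / (u * τ) ^ 2) y :=
    (hasDerivAt_const y c).div hg (by positivity)
  -- derivative of the primitive at r
  have hF : HasDerivAt (fun x : ℝ => ∫ η in (0:ℝ)..x, η ^ (ν - 1) * Real.exp (-η/2))
      (r ^ (ν - 1) * Real.exp (-r/2)) r :=
    integral_hasDerivAt_right (cev_intInt hν r)
      (cev_contOn.stronglyMeasurableAtFilter isOpen_Ioi r hr)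
      ((cev_contOn r hr).continuousAt (isOpen_Ioi.mem_nhds hr))
  have hcomp := hF.comp y hrd
  have hv := ((hasDerivAt_id y).mul hcomp).div_const ((2:ℝ) ^ ν * Real.Gamma ν)
  have hv' : HasDerivAt (fun y' : ℝ => y' *
      (∫ η in (0:ℝ)..(c / (y' ^ (1/ν) * τ)), η ^ (ν - 1) * Real.exp (-η/2))
        / ((2:ℝ) ^ ν * Real.Gamma ν))
      ((1 * (∫ η in (0:ℝ)..r, η ^ (ν - 1) * Real.exp (-η/2)) +
        y * (r ^ (ν - 1) * Real.exp (-r/2) *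
          ((0 * (u * τ) - c * ((1/ν * y ^ (1/ν - 1)) * τ)) / (u * τ) ^ 2)))
        / ((2:ℝ) ^ ν * Real.Gamma ν)) y := hv
  rw [hv'.deriv]
  have hC : (0:ℝ) < (2:ℝ) ^ ν * Real.Gamma ν := by
    have := Real.Gamma_pos_of_pos hν; positivity
  have hrν : r ^ (ν - 1) = r ^ ν / r := by
    rw [Real.rpow_sub hr, Real.rpow_one]
  have hyν : y ^ (1/ν - 1) = u / y := by
    rw [Real.rpow_sub hy, Real.rpow_one]
  rw [hrν, hyν, hrdef]
  field_simp
  ring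

lemma cev_tendsto_zero {ν : ℝ} (hν : 0 < ν) :
    Tendsto (fun x : ℝ =>
      (∫ η in (0:ℝ)..x, η ^ (ν - 1) * Real.exp (-η/2)) / ((2:ℝ) ^ ν * Real.Gamma ν)
      - x ^ ν * Real.exp (-x/2) / (ν * ((2:ℝ) ^ ν * Real.Gamma ν)))
      (𝓝[>] (0:ℝ)) (𝓝 0) := by
  have h1 : Tendsto (fun x : ℝ => ∫ η in (0:ℝ)..x, η ^ (ν - 1) * Real.exp (-η/2))
      (𝓝[>] (0:ℝ)) (𝓝 0) := by
    have hci : IntegrableOn (fun η : ℝ => η ^ (ν - 1) * Real.exp (-η/2)) (uIcc (0:ℝ) 1) := by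
      rw [uIcc_of_le (by norm_num : (0:ℝ) ≤ 1)]
      exact (intervalIntegrable_iff_integrableOn_Icc_of_le (by norm_num : (0:ℝ) ≤ 1)).mp
        (cev_intInt hν 1)
    have hco := continuousOn_primitive_interval (a := (0:ℝ)) (b := 1) hci
    have hcw : ContinuousWithinAt
        (fun x : ℝ => ∫ η in (0:ℝ)..x, η ^ (ν - 1) * Real.exp (-η/2)) (uIcc (0:ℝ) 1) 0 :=
      hco 0 left_mem_uIcc
    have hid : Tendsto (fun x : ℝ => x) (𝓝[>] (0:ℝ)) (𝓝[uIcc (0:ℝ) 1] 0) := by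
      apply tendsto_nhdsWithin_of_tendsto_nhds_of_eventually_within
      · exact tendsto_id.mono_left nhdsWithin_le_nhds
      · filter_upwards [Icc_mem_nhdsGT (by norm_num : (0:ℝ) < 1)] with x hx
        rw [uIcc_of_le (by norm_num : (0:ℝ) ≤ 1)]; exact hx
    have := hcw.tendsto.comp hid
    simpa [Function.comp_def] using this
  have h2 : Tendsto (fun x : ℝ => x ^ ν * Real.exp (-x/2)) (𝓝[>] (0:ℝ)) (𝓝 0) := by
    have hca : ContinuousAt (fun x : ℝ => x ^ ν * Real.exp (-x/2)) 0 :=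
      (Real.continuousAt_rpow_const 0 ν (Or.inr hν.le)).mul
        ((Real.continuous_exp.comp (by continuity)).continuousAt)
    have h3 : Tendsto (fun x : ℝ => x ^ ν * Real.exp (-x/2)) (𝓝[>] (0:ℝ))
        (𝓝 ((0:ℝ) ^ ν * Real.exp (-0/2))) := hca.tendsto.mono_left nhdsWithin_le_nhds
    simpa [Real.zero_rpow hν.ne'] using h3
  have := (h1.div_const ((2:ℝ) ^ ν * Real.Gamma ν)).sub
    (h2.div_const (ν * ((2:ℝ) ^ ν * Real.Gamma ν)))
  simpa using this

lemma cev_tendsto_one {ν : ℝ} (hν : 0 < ν) :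
    Tendsto (fun x : ℝ =>
      (∫ η in (0:ℝ)..x, η ^ (ν - 1) * Real.exp (-η/2)) / ((2:ℝ) ^ ν * Real.Gamma ν)
      - x ^ ν * Real.exp (-x/2) / (ν * ((2:ℝ) ^ ν * Real.Gamma ν)))
      atTop (𝓝 1) := by
  have hC : (0:ℝ) < (2:ℝ) ^ ν * Real.Gamma ν := by
    have := Real.Gamma_pos_of_pos hν; positivity
  have h1 : Tendsto (fun x : ℝ => ∫ η in (0:ℝ)..x, η ^ (ν - 1) * Real.exp (-η/2))
      atTop (𝓝 ((2:ℝ) ^ ν * Real.Gamma ν)) := by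
    have := intervalIntegral_tendsto_integral_Ioi (0:ℝ) (cev_intIoi hν) tendsto_id
    rwa [cev_total hν] at this
  have h2 : Tendsto (fun x : ℝ => x ^ ν * Real.exp (-x/2)) atTop (𝓝 0) := by
    have := tendsto_rpow_mul_exp_neg_mul_atTop_nhds_zero ν (1/2) (by norm_num)
    refine this.congr (fun x => ?_)
    ring_nf
  have := (h1.div_const ((2:ℝ) ^ ν * Real.Gamma ν)).sub
    (h2.div_const (ν * ((2:ℝ) ^ ν * Real.Gamma ν)))
  simpa [div_self hC.ne'] using this

theorem cev_forward_deriv_limits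
    (ν a : ℝ) (hν : 0 < ν) (ha : 0 < a) :
    (∀ τ : ℝ, 0 < τ →
      Tendsto
        (fun y : ℝ => deriv (fun y' : ℝ => y' *
          (∫ η in (0:ℝ)..((2*ν/a)^2 / (y' ^ (1/ν) * τ)),
            η ^ (ν - 1) * Real.exp (-η/2)) / ((2:ℝ) ^ ν * Real.Gamma ν)) y)
        atTop (nhds 0)) ∧
    (∀ y : ℝ, 0 < y →
      Tendsto
        (fun τ : ℝ => deriv (fun y' : ℝ => y' *
          (∫ η in (0:ℝ)..((2*ν/a)^2 / (y' ^ (1/ν) * τ)),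
            η ^ (ν - 1) * Real.exp (-η/2)) / ((2:ℝ) ^ ν * Real.Gamma ν)) y)
        (nhdsWithin 0 (Ioi 0)) (nhds 1)) := by
  have hc : (0:ℝ) < (2*ν/a)^2 := by positivity
  constructor
  · intro τ hτ
    have hr : Tendsto (fun y : ℝ => (2*ν/a)^2 / (y ^ (1/ν) * τ)) atTop (𝓝[>] (0:ℝ)) := by
      apply tendsto_nhdsWithin_of_tendsto_nhds_of_eventually_within
      · exact Tendsto.div_atTop tendsto_const_nhds
          ((tendsto_rpow_atTop (by positivity)).atTop_mul_const hτ)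
      · filter_upwards [eventually_gt_atTop (0:ℝ)] with y hy
        exact div_pos hc (by positivity)
    have htd := (cev_tendsto_zero hν).comp hr
    apply htd.congr'
    filter_upwards [eventually_gt_atTop (0:ℝ)] with y hy
    exact (cev_deriv hν ha hτ hy).symm
  · intro y hy
    have hk : (0:ℝ) < (2*ν/a)^2 / y ^ (1/ν) := by
      have := Real.rpow_pos_of_pos hy (1/ν); positivity
    have hr : Tendsto (fun τ : ℝ => (2*ν/a)^2 / (y ^ (1/ν) * τ)) (𝓝[>] (0:ℝ)) atTop := by
      have h1 : Tendsto (fun τ : ℝ => ((2*ν/a)^2 / y ^ (1/ν)) * τ⁻¹) (𝓝[>] (0:ℝ)) atTop :=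
        tendsto_inv_nhdsGT_zero.const_mul_atTop hk
      refine h1.congr (fun τ => ?_)
      rw [div_eq_mul_inv ((2*ν/a)^2) (y ^ (1/ν) * τ), mul_inv, ← mul_assoc, div_eq_mul_inv]
    have htd := (cev_tendsto_one hν).comp hr
    apply htd.congr'
    filter_upwards [self_mem_nhdsWithin] with τ hτ
    exact (cev_deriv hν ha (mem_Ioi.mp hτ) hy).symm
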